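/- Generalized Crapo formula: for a pseudo-arithmetic matroid with integral multiplicities, M_A(x,y) = Σ_{(B,C)} x^{|I(B)∩C|} y^{|E(B)∩C|}, where the sum is over pairs of a basis B and a subset C ⊆ E(B)∪I(B), each pair counted with multiplicity ρ((B∪C)∖I(B), (B∖C)∪E(B)). -/

import Mathlib

open scoped Classical

/-- `[R, R ∪ F ∪ T]` is a molecule for the rank function `rk`. -/
def IsMoleculeWith {α : Type*} [DecidableEq α] (rk : Finset α → ℕ)
    (R F T : Finset α) : Prop :=
  Disjoint R F ∧ Disjoint R T ∧ Disjoint F T ∧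
  ∀ A : Finset α, R ⊆ A → A ⊆ R ∪ F ∪ T → rk A = rk R + (A ∩ F).card

/-- `ρ(R,S)` for the molecule `[R,S]` with dependent part `T` (integral multiplicities). -/
def rho {α : Type*} [DecidableEq α] (m : Finset α → ℤ) (T R S : Finset α) : ℤ :=
  (-1) ^ T.card * ∑ A ∈ Finset.Icc R S, (-1) ^ (S.card - A.card) * m A

/-- `B` is a basis of the matroid with rank function `rk`. -/
def IsBasis {α : Type*} [Fintype α] [DecidableEq α] (rk : Finset α → ℕ)
    (B : Finset α) : Prop :=
  rk B = B.card ∧ rk B = rk Finset.univ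

/-- Externally active elements of the basis `B`. -/
def extAct {α : Type*} [Fintype α] [LinearOrder α] (rk : Finset α → ℕ)
    (B : Finset α) : Finset α :=
  (Finset.univ \ B).filter
    (fun e => rk (insert e (B.filter (fun b => e < b))) = rk (B.filter (fun b => e < b)))

-- Internally active elements of the basis `B`.
open scoped Classical in
noncomputable def intAct {α : Type*} [Fintype α] [LinearOrder α] (rk : Finset α → ℕ)
    (B : Finset α) : Finset α :=
  B.filter (fun e => ∀ f : α, f < e → ¬ IsBasis rk (insert f (B.erase e)))

open Finset
set_option linter.unusedSectionVars false
set_option linter.unnecessarySimpa false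

section Basics
variable {α : Type*} [Fintype α] [DecidableEq α] (rk : Finset α → ℕ)

/-- `e` is in the closure of `S`. -/
def inCl (e : α) (S : Finset α) : Prop := rk (insert e S) = rk S

variable {rk}
variable (hR0 : rk ∅ = 0)
    (hR1 : ∀ A B : Finset α, A ⊆ B → rk A ≤ rk B)
    (hR2 : ∀ A B : Finset α, rk (A ∪ B) + rk (A ∩ B) ≤ rk A + rk B)
    (hR3 : ∀ (A : Finset α) (e : α), rk (insert e A) ≤ rk A + 1)

theorem inCl_of_mem {e : α} {S : Finset α} (h : e ∈ S) : inCl rk e S := by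
  unfold inCl; rw [Finset.insert_eq_self.2 h]

include hR1 hR2 in
theorem inCl_mono {e : α} {S T : Finset α} (hST : S ⊆ T) (h : inCl rk e S) :
    inCl rk e T := by
  by_cases heT : e ∈ T
  · exact inCl_of_mem heT
  have h2 := hR2 (insert e S) T
  have hu : insert e S ∪ T = insert e T := by
    rw [Finset.insert_union, Finset.union_eq_right.2 hST]
  have hi : insert e S ∩ T = S := by
    ext a
    simp only [Finset.mem_inter, Finset.mem_insert]
    constructor
    · rintro ⟨h1 | h1, h2⟩
      · exact absurd (h1 ▸ h2) heT
      · exact h1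
    · intro ha; exact ⟨Or.inr ha, hST ha⟩
  rw [hu, hi, h] at h2
  exact le_antisymm (by omega) (hR1 _ _ (Finset.subset_insert _ _))

include hR1 hR3 in
theorem rk_insert_cases (e : α) (S : Finset α) :
    rk (insert e S) = rk S ∨ rk (insert e S) = rk S + 1 := by
  have h1 := hR3 S e
  have h2 := hR1 S (insert e S) (Finset.subset_insert _ _)
  omega

include hR1 hR3 in
theorem rk_insert_of_not_inCl {e : α} {S : Finset α} (h : ¬ inCl rk e S) :
    rk (insert e S) = rk S + 1 := by
  rcases rk_insert_cases hR1 hR3 e S with h' | h'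
  · exact absurd h' h
  · exact h'

include hR1 hR3 in
theorem rk_union_le (S T : Finset α) : rk (S ∪ T) ≤ rk S + T.card := by
  induction T using Finset.induction with
  | empty => simpa using hR1 _ _ (Finset.Subset.refl S)
  | @insert a T ha ih =>
    calc rk (S ∪ insert a T) = rk (insert a (S ∪ T)) := by rw [Finset.union_insert]
    _ ≤ rk (S ∪ T) + 1 := hR3 _ _
    _ ≤ rk S + T.card + 1 := by omega
    _ = rk S + (insert a T).card := by rw [Finset.card_insert_of_notMem ha]; omega

include hR1 hR2 in
theorem rk_union_eq_of_forall_inCl {S T : Finset α} (h : ∀ s ∈ S, inCl rk s T) :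
    rk (S ∪ T) = rk T := by
  induction S using Finset.induction with
  | empty => simp
  | @insert a S ha ih =>
    rw [Finset.insert_union]
    have h1 : inCl rk a (S ∪ T) :=
      inCl_mono hR1 hR2 Finset.subset_union_right (h a (Finset.mem_insert_self _ _))
    rw [h1, ih fun s hs => h s (Finset.mem_insert_of_mem hs)]

include hR1 hR2 in
theorem inCl_trans {e : α} {S T : Finset α} (hS : inCl rk e S)
    (h : ∀ s ∈ S, inCl rk s T) : inCl rk e T := by
  have h1 : inCl rk e (S ∪ T) := inCl_mono hR1 hR2 Finset.subset_union_left hS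
  have h2 : rk (S ∪ T) = rk T := rk_union_eq_of_forall_inCl hR1 hR2 h
  have h3 : rk (insert e T) ≤ rk (insert e (S ∪ T)) :=
    hR1 _ _ (Finset.insert_subset_insert _ Finset.subset_union_right)
  have h4 := hR1 T (insert e T) (Finset.subset_insert _ _)
  unfold inCl at *
  omega

include hR0 hR1 hR3 in
theorem rk_le_card (S : Finset α) : rk S ≤ S.card := by
  have := rk_union_le hR1 hR3 ∅ S
  simpa [hR0] using this

include hR0 hR1 hR3 in
theorem rk_eq_card_of_subset {S T : Finset α} (hST : S ⊆ T) (hT : rk T = T.card) :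
    rk S = S.card ∧ rk S + (T \ S).card = rk T := by
  have h1 : S ∪ (T \ S) = T := Finset.union_sdiff_of_subset hST
  have h2 : rk T ≤ rk S + (T \ S).card := by
    calc rk T = rk (S ∪ (T \ S)) := by rw [h1]
    _ ≤ rk S + (T \ S).card := rk_union_le hR1 hR3 _ _
  have h3 : (T \ S).card + S.card = T.card := Finset.card_sdiff_add_card_eq_card hST
  have h4 : rk S ≤ S.card := rk_le_card hR0 hR1 hR3 S
  omega

include hR1 hR2 hR3 in
theorem inCl_exchange {x y : α} {S : Finset α} (h1 : inCl rk x (insert y S))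
    (h2 : ¬ inCl rk x S) : inCl rk y (insert x S) := by
  have h3 : rk (insert x S) = rk S + 1 := rk_insert_of_not_inCl hR1 hR3 h2
  have h4 : rk (insert y (insert x S)) = rk (insert x (insert y S)) := by
    rw [Finset.insert_comm]
  have h5 := hR3 S y
  have h6 : rk (insert x S) ≤ rk (insert y (insert x S)) :=
    hR1 _ _ (Finset.subset_insert _ _)
  unfold inCl at *
  omega

include hR1 in
theorem exists_minimal_inCl {e : α} {S : Finset α} (h : inCl rk e S) :
    ∃ S₀ ⊆ S, inCl rk e S₀ ∧ ∀ b ∈ S₀, ¬ inCl rk e (S₀.erase b) := by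
  classical
  suffices H : ∀ n (S : Finset α), S.card = n → inCl rk e S →
      ∃ S₀ ⊆ S, inCl rk e S₀ ∧ ∀ b ∈ S₀, ¬ inCl rk e (S₀.erase b) by
    exact H S.card S rfl h
  clear h S
  intro n
  induction n using Nat.strong_induction_on with
  | _ n ih =>
  intro S hn h
  subst hn
  by_cases hall : ∀ b ∈ S, ¬ inCl rk e (S.erase b)
  · exact ⟨S, Finset.Subset.refl S, h, hall⟩
  · push_neg at hall
    obtain ⟨b, hb, hin⟩ := hall
    have hlt : (S.erase b).card < S.card := Finset.card_erase_lt_of_mem hb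
    obtain ⟨S₀, hsub, h1, h2⟩ := ih (S.erase b).card hlt (S.erase b) rfl hin
    exact ⟨S₀, hsub.trans (Finset.erase_subset _ _), h1, h2⟩

end Basics

theorem neg_one_pow_double (p : ℕ) : ((-1 : ℝ))^p * (-1)^p = 1 := by
  rw [← pow_add]
  exact Even.neg_one_pow ⟨p, rfl⟩

theorem sum_powerset_sign {α : Type*} [DecidableEq α] (z : ℝ) (s : Finset α) :
    ∑ t ∈ s.powerset, (-1 : ℝ)^(s.card - t.card) * z^t.card = (z - 1)^s.card := by
  have h := Finset.prod_add (fun _ : α => z) (fun _ : α => (-1 : ℝ)) s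
  simp only [Finset.prod_const] at h
  have h2 : (z + -1)^s.card = (z - 1)^s.card := by ring_nf
  rw [h2] at h
  rw [h]
  refine Finset.sum_congr rfl (fun t ht => ?_)
  have hts : t ⊆ s := Finset.mem_powerset.1 ht
  rw [Finset.card_sdiff_of_subset hts, mul_comm]

section Act
variable {α : Type*} [Fintype α] [LinearOrder α] {rk : Finset α → ℕ}
variable (hR0 : rk ∅ = 0)
    (hR1 : ∀ A B : Finset α, A ⊆ B → rk A ≤ rk B)
    (hR2 : ∀ A B : Finset α, rk (A ∪ B) + rk (A ∩ B) ≤ rk A + rk B)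
    (hR3 : ∀ (A : Finset α) (e : α), rk (insert e A) ≤ rk A + 1)

theorem intAct_subset (B : Finset α) : intAct rk B ⊆ B := Finset.filter_subset _ _

theorem extAct_disj (B : Finset α) : ∀ e ∈ extAct rk B, e ∉ B := by
  intro e he
  simp only [extAct, Finset.mem_filter, Finset.mem_sdiff] at he
  exact he.1.2

theorem mem_extAct_iff {B : Finset α} {e : α} :
    e ∈ extAct rk B ↔ e ∉ B ∧ inCl rk e (B.filter (fun b => e < b)) := by
  simp only [extAct, Finset.mem_filter, Finset.mem_sdiff, Finset.mem_univ, true_and, inCl]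

include hR1 in
theorem basis_spanning {B : Finset α} (hB : IsBasis rk B) (x : α) : inCl rk x B := by
  have h1 : rk (insert x B) ≤ rk Finset.univ := hR1 _ _ (Finset.subset_univ _)
  have h2 : rk B ≤ rk (insert x B) := hR1 _ _ (Finset.subset_insert _ _)
  have h3 := hB.2
  unfold inCl
  omega

include hR0 hR1 hR3 in
theorem rk_erase_basis {B : Finset α} (hB : IsBasis rk B) {e : α} (he : e ∈ B) :
    rk (B.erase e) = B.card - 1 := by
  have := (rk_eq_card_of_subset hR0 hR1 hR3 (Finset.erase_subset e B) hB.1).1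
  rw [this, Finset.card_erase_of_mem he]

include hR0 hR1 hR2 hR3 in
theorem extAct_strong {B : Finset α} {e : α} (hB : IsBasis rk B) (he : e ∈ extAct rk B) :
    ∃ S₀ ⊆ B.filter (fun b => e < b), inCl rk e S₀ ∧ ∀ b ∈ S₀, b ∉ intAct rk B := by
  rw [mem_extAct_iff] at he
  obtain ⟨S₀, hsub, h1, h2⟩ := exists_minimal_inCl hR1 he.2
  refine ⟨S₀, hsub, h1, fun b hb hbact => ?_⟩
  simp only [intAct, Finset.mem_filter] at hbact
  have hbB : b ∈ B := (Finset.mem_filter.1 (hsub hb)).1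
  have heb : e < b := (Finset.mem_filter.1 (hsub hb)).2
  refine hbact.2 e heb ?_
  -- show IsBasis (insert e (B.erase b))
  have hex : inCl rk b (insert e (S₀.erase b)) := by
    refine inCl_exchange hR1 hR2 hR3 ?_ (h2 b hb)
    rw [Finset.insert_erase hb]; exact h1
  have hmono : inCl rk b (insert e (B.erase b)) :=
    inCl_mono hR1 hR2 (Finset.insert_subset_insert _
      (Finset.erase_subset_erase _ (hsub.trans (Finset.filter_subset _ _)))) hex
  have hkey : insert b (insert e (B.erase b)) = insert e B := by
    rw [Finset.insert_comm, Finset.insert_erase hbB]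
  have hspan : rk (insert e B) = rk B := basis_spanning hR1 hB e
  have hrk : rk (insert e (B.erase b)) = rk Finset.univ := by
    have := hmono
    unfold inCl at this
    rw [hkey, hspan, hB.2] at this
    exact this.symm
  have hcard : (insert e (B.erase b)).card = B.card := by
    rw [Finset.card_insert_of_notMem, Finset.card_erase_of_mem hbB]
    · have : 1 ≤ B.card := Finset.card_pos.2 ⟨b, hbB⟩
      omega
    · simp only [Finset.mem_erase]
      rintro ⟨-, heB⟩
      exact he.1 heB
  exact ⟨by rw [hrk, hcard, ← hB.1, hB.2], hrk⟩

include hR0 hR1 hR3 in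
theorem mem_intAct_iff {B : Finset α} (hB : IsBasis rk B) {e : α} (he : e ∈ B) :
    e ∈ intAct rk B ↔ ∀ f, f < e → inCl rk f (B.erase e) := by
  have hcard1 : 1 ≤ B.card := Finset.card_pos.2 ⟨e, he⟩
  have her : rk (B.erase e) = B.card - 1 := rk_erase_basis hR0 hR1 hR3 hB he
  simp only [intAct, Finset.mem_filter, he, true_and]
  constructor
  · intro hall f hf
    by_cases hfB : f ∈ B
    · exact inCl_of_mem (Finset.mem_erase.2 ⟨ne_of_lt hf, hfB⟩)
    · by_contra hncl
      refine hall f hf ?_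
      have hrk : rk (insert f (B.erase e)) = B.card - 1 + 1 :=
        her ▸ rk_insert_of_not_inCl hR1 hR3 hncl
      have hcard : (insert f (B.erase e)).card = B.card := by
        rw [Finset.card_insert_of_notMem (fun hmem => hfB (Finset.mem_of_mem_erase hmem)),
          Finset.card_erase_of_mem he]
        omega
      constructor
      · omega
      · rw [hrk, ← hB.2, hB.1]; omega
  · intro hcl f hf hbas
    by_cases hfB : f ∈ B
    · have : insert f (B.erase e) = B.erase e :=
        Finset.insert_eq_self.2 (Finset.mem_erase.2 ⟨ne_of_lt hf, hfB⟩)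
      rw [this] at hbas
      have := hbas.2
      rw [her, ← hB.2, hB.1] at this
      omega
    · have h1 : inCl rk f (B.erase e) := hcl f hf
      have := hbas.2
      unfold inCl at h1
      rw [h1, her, ← hB.2, hB.1] at this
      omega

include hR0 hR1 hR2 hR3 in
theorem rk_interval {B I₀ E₀ : Finset α} (hB : IsBasis rk B)
    (hI : I₀ ⊆ intAct rk B) (hE : E₀ ⊆ extAct rk B) :
    rk ((B \ I₀) ∪ E₀) = B.card - I₀.card := by
  have hIB : I₀ ⊆ B := hI.trans (intAct_subset B)
  have hcl : ∀ x ∈ E₀, inCl rk x (B \ I₀) := by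
    intro x hx
    obtain ⟨S₀, hsub, h1, h2⟩ := extAct_strong hR0 hR1 hR2 hR3 hB (hE hx)
    refine inCl_mono hR1 hR2 ?_ h1
    intro b hb
    refine Finset.mem_sdiff.2 ⟨(Finset.mem_filter.1 (hsub hb)).1, fun hbI => h2 b hb (hI hbI)⟩
  rw [Finset.union_comm, rk_union_eq_of_forall_inCl hR1 hR2 hcl,
    (rk_eq_card_of_subset hR0 hR1 hR3 (Finset.sdiff_subset) hB.1).1,
    Finset.card_sdiff_of_subset hIB]

open scoped Classical in
/-- Pass-1 greedy set: maximal independent subset of `A` preferring large elements. -/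
noncomputable def G1 (rk : Finset α → ℕ) (A : Finset α) : Finset α :=
  A.filter (fun a => ¬ inCl rk a (A.filter (fun b => a < b)))

open scoped Classical in
/-- Pass-2 greedy set: extension of `G1 rk A` to a basis preferring small elements. -/
noncomputable def G2 (rk : Finset α → ℕ) (A : Finset α) : Finset α :=
  (Finset.univ \ A).filter
    (fun f => ¬ inCl rk f (G1 rk A ∪ (Finset.univ \ A).filter (fun b => b < f)))

theorem G1_subset (A : Finset α) : G1 rk A ⊆ A := Finset.filter_subset _ _

theorem G2_disj (A : Finset α) : ∀ f ∈ G2 rk A, f ∉ A := by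
  intro f hf
  exact (Finset.mem_sdiff.1 (Finset.filter_subset _ _ hf)).2

theorem measure_lt_gt {a x : α} (h : a < x) :
    (Finset.univ.filter (fun b => x < b)).card <
      (Finset.univ.filter (fun b => a < b)).card := by
  refine Finset.card_lt_card ⟨fun b hb => ?_, fun hsub => ?_⟩
  · simp only [Finset.mem_filter, Finset.mem_univ, true_and] at *
    exact h.trans hb
  · have hx : x ∈ Finset.univ.filter (fun b => a < b) := by simp [h]
    have := hsub hx
    simp at this
theorem measure_lt_lt {a x : α} (h : x < a) :
    (Finset.univ.filter (fun b => b < x)).card <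
      (Finset.univ.filter (fun b => b < a)).card := by
  refine Finset.card_lt_card ⟨fun b hb => ?_, fun hsub => ?_⟩
  · simp only [Finset.mem_filter, Finset.mem_univ, true_and] at *
    exact hb.trans h
  · have hx : x ∈ Finset.univ.filter (fun b => b < a) := by simp [h]
    have := hsub hx
    simp at this

include hR0 hR1 hR3 in
theorem rk_eq_card_of_greedy {S : Finset α}
    (h : ∀ s ∈ S, ¬ inCl rk s (S.filter (fun b => s < b))) : rk S = S.card := by
  classical
  suffices H : ∀ (n : ℕ) (S : Finset α), S.card = n →
      (∀ s ∈ S, ¬ inCl rk s (S.filter (fun b => s < b))) → rk S = S.card by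
    exact H _ S rfl h
  clear h S
  intro n
  induction n with
  | zero =>
    intro S hn h
    rw [Finset.card_eq_zero] at hn
    subst hn; simpa using hR0
  | succ n ih =>
    intro S hn h
    have hS : S.Nonempty := by
      rw [← Finset.card_pos]; omega
    set s := S.min' hS with hs
    have hsS : s ∈ S := S.min'_mem hS
    have hfe : S.filter (fun b => s < b) = S.erase s := by
      ext b
      simp only [Finset.mem_filter, Finset.mem_erase]
      constructor
      · rintro ⟨hb, hlt⟩; exact ⟨ne_of_gt hlt, hb⟩
      · rintro ⟨hne, hb⟩; exact ⟨hb, lt_of_le_of_ne (S.min'_le b hb) (Ne.symm hne)⟩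
    have hni : ¬ inCl rk s (S.erase s) := hfe ▸ h s hsS
    have hins : insert s (S.erase s) = S := Finset.insert_erase hsS
    have h1 : rk S = rk (S.erase s) + 1 := by
      conv_lhs => rw [← hins]
      exact rk_insert_of_not_inCl hR1 hR3 hni
    have h2 : rk (S.erase s) = (S.erase s).card := by
      refine ih _ ?_ (fun t ht => ?_)
      swap
      · have htS : t ∈ S := Finset.mem_of_mem_erase ht
        have : (S.erase s).filter (fun b => t < b) = S.filter (fun b => t < b) := by
          ext b
          simp only [Finset.mem_filter, Finset.mem_erase]
          constructor
          · rintro ⟨⟨_, hb⟩, h2⟩; exact ⟨hb, h2⟩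
          · rintro ⟨hb, h2⟩
            refine ⟨⟨fun hbs => ?_, hb⟩, h2⟩
            subst hbs
            exact absurd (S.min'_le t htS) (not_le.2 h2)
        rw [this]; exact h t htS
      · rw [Finset.card_erase_of_mem hsS]; omega
    rw [h1, h2, Finset.card_erase_of_mem hsS]
    omega

include hR1 hR3 in
theorem rk_union_eq_add_of_greedy {S T : Finset α}
    (h : ∀ t ∈ T, ¬ inCl rk t (S ∪ T.filter (fun b => b < t))) :
    rk (S ∪ T) = rk S + T.card := by
  classical
  suffices H : ∀ (n : ℕ) (T : Finset α), T.card = n →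
      (∀ t ∈ T, ¬ inCl rk t (S ∪ T.filter (fun b => b < t))) → rk (S ∪ T) = rk S + T.card by
    exact H _ T rfl h
  clear h T
  intro n
  induction n with
  | zero =>
    intro T hn h
    rw [Finset.card_eq_zero] at hn
    subst hn; simp
  | succ n ih =>
    intro T hn h
    have hT : T.Nonempty := by
      rw [← Finset.card_pos]; omega
    set t := T.max' hT with ht
    have htT : t ∈ T := T.max'_mem hT
    have hfe : T.filter (fun b => b < t) = T.erase t := by
      ext b
      simp only [Finset.mem_filter, Finset.mem_erase]
      constructor
      · rintro ⟨hb, hlt⟩; exact ⟨ne_of_lt hlt, hb⟩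
      · rintro ⟨hne, hb⟩; exact ⟨hb, lt_of_le_of_ne (T.le_max' b hb) hne⟩
    have hni : ¬ inCl rk t (S ∪ T.erase t) := hfe ▸ h t htT
    have hins : insert t (S ∪ T.erase t) = S ∪ T := by
      rw [← Finset.union_insert, Finset.insert_erase htT]
    have h1 : rk (S ∪ T) = rk (S ∪ T.erase t) + 1 := by
      conv_lhs => rw [← hins]
      exact rk_insert_of_not_inCl hR1 hR3 hni
    have h2 : rk (S ∪ T.erase t) = rk S + (T.erase t).card := by
      refine ih _ ?_ (fun u hu => ?_)
      swap
      · have huT : u ∈ T := Finset.mem_of_mem_erase hu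
        have : (T.erase t).filter (fun b => b < u) = T.filter (fun b => b < u) := by
          ext b
          simp only [Finset.mem_filter, Finset.mem_erase]
          constructor
          · rintro ⟨⟨_, hb⟩, h2⟩; exact ⟨hb, h2⟩
          · rintro ⟨hb, h2⟩
            refine ⟨⟨fun hbs => ?_, hb⟩, h2⟩
            subst hbs
            exact absurd (T.le_max' u huT) (not_le.2 h2)
        rw [this]; exact h u huT
      · rw [Finset.card_erase_of_mem htT]; omega
    rw [h1, h2, Finset.card_erase_of_mem htT]
    omega

include hR1 hR2 in
theorem G1_cl (A : Finset α) :
    ∀ a ∈ A, a ∉ G1 rk A → inCl rk a ((G1 rk A).filter (fun b => a < b)) := by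
  classical
  suffices H : ∀ (n : ℕ) (a : α), (Finset.univ.filter (fun b => a < b)).card = n →
      a ∈ A → a ∉ G1 rk A → inCl rk a ((G1 rk A).filter (fun b => a < b)) by
    intro a ha hna; exact H _ a rfl ha hna
  intro n
  induction n using Nat.strong_induction_on with
  | _ n ih =>
  intro a hn ha hna
  have hcl : inCl rk a (A.filter (fun b => a < b)) := by
    by_contra hc
    exact hna (Finset.mem_filter.2 ⟨ha, hc⟩)
  refine inCl_trans hR1 hR2 hcl ?_
  intro x hx
  obtain ⟨hxA, hax⟩ := Finset.mem_filter.1 hx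
  by_cases hxG : x ∈ G1 rk A
  · exact inCl_of_mem (Finset.mem_filter.2 ⟨hxG, hax⟩)
  · have hlt : (Finset.univ.filter (fun b => x < b)).card < n := hn ▸ measure_lt_gt hax
    have hx2 := ih _ hlt x rfl hxA hxG
    refine inCl_mono hR1 hR2 (fun b hb => ?_) hx2
    obtain ⟨hb1, hb2⟩ := Finset.mem_filter.1 hb
    exact Finset.mem_filter.2 ⟨hb1, hax.trans hb2⟩

include hR1 hR2 in
theorem G2_cl (A : Finset α) (W : Finset α) (P : α → Prop)
    (hG1 : G1 rk A ⊆ W) (hmem : ∀ x ∈ G2 rk A, P x → x ∈ W)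
    (hdown : ∀ x g : α, P g → x < g → P x) :
    ∀ g, g ∉ A → P g → inCl rk g W := by
  classical
  suffices H : ∀ (n : ℕ) (g : α), (Finset.univ.filter (fun b => b < g)).card = n →
      g ∉ A → P g → inCl rk g W by
    intro g hg hP; exact H _ g rfl hg hP
  intro n
  induction n using Nat.strong_induction_on with
  | _ n ih =>
  intro g hn hgA hPg
  by_cases hgG : g ∈ G2 rk A
  · exact inCl_of_mem (hmem g hgG hPg)
  · have hcl : inCl rk g (G1 rk A ∪ (Finset.univ \ A).filter (fun b => b < g)) := by
      by_contra hc
      exact hgG (Finset.mem_filter.2 ⟨Finset.mem_sdiff.2 ⟨Finset.mem_univ g, hgA⟩, hc⟩)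
    refine inCl_trans hR1 hR2 hcl ?_
    intro x hx
    rcases Finset.mem_union.1 hx with hx1 | hx2
    · exact inCl_of_mem (hG1 hx1)
    · obtain ⟨hx3, hxg⟩ := Finset.mem_filter.1 hx2
      have hxA : x ∉ A := (Finset.mem_sdiff.1 hx3).2
      have hlt : (Finset.univ.filter (fun b => b < x)).card < n := hn ▸ measure_lt_lt hxg
      exact ih _ hlt x rfl hxA (hdown x g hPg hxg)

include hR1 hR2 in
theorem G1_not_inCl (A : Finset α) :
    ∀ s ∈ G1 rk A, ¬ inCl rk s ((G1 rk A).filter (fun b => s < b)) := by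
  intro s hs hcl
  have h1 : ¬ inCl rk s (A.filter (fun b => s < b)) := (Finset.mem_filter.1 hs).2
  refine h1 (inCl_mono hR1 hR2 (fun b hb => ?_) hcl)
  obtain ⟨hb1, hb2⟩ := Finset.mem_filter.1 hb
  exact Finset.mem_filter.2 ⟨G1_subset A hb1, hb2⟩

include hR1 hR2 in
theorem G2_not_inCl (A : Finset α) :
    ∀ t ∈ G2 rk A, ¬ inCl rk t (G1 rk A ∪ (G2 rk A).filter (fun b => b < t)) := by
  intro t ht hcl
  have h1 : ¬ inCl rk t (G1 rk A ∪ (Finset.univ \ A).filter (fun b => b < t)) :=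
    (Finset.mem_filter.1 ht).2
  refine h1 (inCl_mono hR1 hR2 (fun b hb => ?_) hcl)
  rcases Finset.mem_union.1 hb with hb1 | hb2
  · exact Finset.mem_union_left _ hb1
  · obtain ⟨hb3, hb4⟩ := Finset.mem_filter.1 hb2
    exact Finset.mem_union_right _
      (Finset.mem_filter.2 ⟨Finset.mem_sdiff.2 ⟨Finset.mem_univ b, G2_disj A b hb3⟩, hb4⟩)

theorem G1_G2_disjoint (A : Finset α) : Disjoint (G1 rk A) (G2 rk A) := by
  rw [Finset.disjoint_left]
  intro a h1 h2
  exact G2_disj A a h2 (G1_subset A h1)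

include hR0 hR1 hR2 hR3 in
theorem G_basis (A : Finset α) : IsBasis rk (G1 rk A ∪ G2 rk A) := by
  have hIndep : rk (G1 rk A) = (G1 rk A).card :=
    rk_eq_card_of_greedy hR0 hR1 hR3 (G1_not_inCl hR1 hR2 A)
  have hAdd : rk (G1 rk A ∪ G2 rk A) = rk (G1 rk A) + (G2 rk A).card :=
    rk_union_eq_add_of_greedy hR1 hR3 (G2_not_inCl hR1 hR2 A)
  have hcard : (G1 rk A ∪ G2 rk A).card = (G1 rk A).card + (G2 rk A).card :=
    Finset.card_union_of_disjoint (G1_G2_disjoint A)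
  have hspan : ∀ v ∈ Finset.univ \ (G1 rk A ∪ G2 rk A), inCl rk v (G1 rk A ∪ G2 rk A) := by
    intro v hv
    have hvG : v ∉ G1 rk A ∪ G2 rk A := (Finset.mem_sdiff.1 hv).2
    by_cases hvA : v ∈ A
    · have hvG1 : v ∉ G1 rk A := fun h => hvG (Finset.mem_union_left _ h)
      refine inCl_mono hR1 hR2 (fun b hb => ?_) (G1_cl hR1 hR2 A v hvA hvG1)
      exact Finset.mem_union_left _ (Finset.mem_filter.1 hb).1
    · exact G2_cl hR1 hR2 A (G1 rk A ∪ G2 rk A) (fun _ => True)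
        Finset.subset_union_left (fun x hx _ => Finset.mem_union_right _ hx)
        (fun _ _ _ _ => trivial) v hvA trivial
  have hspanned : rk (G1 rk A ∪ G2 rk A) = rk Finset.univ := by
    have h1 : rk ((Finset.univ \ (G1 rk A ∪ G2 rk A)) ∪ (G1 rk A ∪ G2 rk A)) =
        rk (G1 rk A ∪ G2 rk A) := rk_union_eq_of_forall_inCl hR1 hR2 hspan
    rw [Finset.sdiff_union_of_subset (Finset.subset_univ _)] at h1
    exact h1.symm
  exact ⟨by rw [hAdd, hIndep, hcard], hspanned⟩

include hR0 hR1 hR2 hR3 in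
theorem G_ext (A : Finset α) : A \ (G1 rk A ∪ G2 rk A) ⊆ extAct rk (G1 rk A ∪ G2 rk A) := by
  intro a ha
  obtain ⟨haA, haG⟩ := Finset.mem_sdiff.1 ha
  have haG1 : a ∉ G1 rk A := fun h => haG (Finset.mem_union_left _ h)
  rw [mem_extAct_iff]
  refine ⟨haG, inCl_mono hR1 hR2 (fun b hb => ?_) (G1_cl hR1 hR2 A a haA haG1)⟩
  obtain ⟨hb1, hb2⟩ := Finset.mem_filter.1 hb
  exact Finset.mem_filter.2 ⟨Finset.mem_union_left _ hb1, hb2⟩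

include hR0 hR1 hR2 hR3 in
theorem G_int (A : Finset α) : (G1 rk A ∪ G2 rk A) \ A ⊆ intAct rk (G1 rk A ∪ G2 rk A) := by
  intro f hf
  obtain ⟨hfG, hfA⟩ := Finset.mem_sdiff.1 hf
  have hfG1 : f ∉ G1 rk A := fun h => hfA (G1_subset A h)
  rw [mem_intAct_iff hR0 hR1 hR3 (G_basis hR0 hR1 hR2 hR3 A) hfG]
  intro g hg
  by_cases hgA : g ∈ A
  · by_cases hgG1 : g ∈ G1 rk A
    · exact inCl_of_mem (Finset.mem_erase.2 ⟨fun h => hfA (h ▸ hgA), Finset.mem_union_left _ hgG1⟩)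
    · refine inCl_mono hR1 hR2 (fun b hb => ?_) (G1_cl hR1 hR2 A g hgA hgG1)
      obtain ⟨hb1, _⟩ := Finset.mem_filter.1 hb
      exact Finset.mem_erase.2 ⟨fun h => hfG1 (h ▸ hb1), Finset.mem_union_left _ hb1⟩
  · refine G2_cl hR1 hR2 A ((G1 rk A ∪ G2 rk A).erase f) (fun z => z < f) ?_ ?_ ?_ g hgA hg
    · intro b hb
      exact Finset.mem_erase.2 ⟨fun h => hfG1 (h ▸ hb), Finset.mem_union_left _ hb⟩
    · intro x hx hxf
      exact Finset.mem_erase.2 ⟨ne_of_lt hxf, Finset.mem_union_right _ hx⟩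
    · intro u v hv huv
      exact huv.trans hv

include hR0 hR1 hR2 hR3 in
theorem basis_unique {A B : Finset α} (hB : IsBasis rk B)
    (h1 : B \ A ⊆ intAct rk B) (h2 : A \ B ⊆ extAct rk B) :
    B = G1 rk A ∪ G2 rk A := by
  have hBcard : 0 < B.card ∨ B.card = 0 := by omega
  -- B ∩ A = G1
  have hU1a : ∀ a ∈ B ∩ A, a ∈ G1 rk A := by
    intro a ha
    obtain ⟨haB, haA⟩ := Finset.mem_inter.1 ha
    refine Finset.mem_filter.2 ⟨haA, fun hcl => ?_⟩
    have hall : ∀ x ∈ A.filter (fun b => a < b), inCl rk x (B.erase a) := by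
      intro x hx
      obtain ⟨hxA, hax⟩ := Finset.mem_filter.1 hx
      by_cases hxB : x ∈ B
      · exact inCl_of_mem (Finset.mem_erase.2 ⟨ne_of_gt hax, hxB⟩)
      · have hxE : x ∈ extAct rk B := h2 (Finset.mem_sdiff.2 ⟨hxA, hxB⟩)
        rw [mem_extAct_iff] at hxE
        refine inCl_mono hR1 hR2 (fun b hb => ?_) hxE.2
        obtain ⟨hb1, hb2⟩ := Finset.mem_filter.1 hb
        exact Finset.mem_erase.2 ⟨ne_of_gt (hax.trans hb2), hb1⟩
    have hfin : inCl rk a (B.erase a) := inCl_trans hR1 hR2 hcl hall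
    unfold inCl at hfin
    rw [Finset.insert_erase haB] at hfin
    have h3 : rk (B.erase a) = B.card - 1 := rk_erase_basis hR0 hR1 hR3 hB haB
    have h4 : 1 ≤ B.card := Finset.card_pos.2 ⟨a, haB⟩
    have h5 := hB.1
    omega
  have hU1b : ∀ a ∈ G1 rk A, a ∈ B ∩ A := by
    intro a ha
    obtain ⟨haA, hcl⟩ := Finset.mem_filter.1 ha
    refine Finset.mem_inter.2 ⟨?_, haA⟩
    by_contra haB
    have haE : a ∈ extAct rk B := h2 (Finset.mem_sdiff.2 ⟨haA, haB⟩)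
    obtain ⟨S₀, hsub, hS1, hS2⟩ := extAct_strong hR0 hR1 hR2 hR3 hB haE
    refine hcl (inCl_mono hR1 hR2 (fun b hb => ?_) hS1)
    obtain ⟨hbB, hab⟩ := Finset.mem_filter.1 (hsub hb)
    have hbA : b ∈ A := by
      by_contra hbA
      exact hS2 b hb (h1 (Finset.mem_sdiff.2 ⟨hbB, hbA⟩))
    exact Finset.mem_filter.2 ⟨hbA, hab⟩
  have hG1eq : B ∩ A = G1 rk A := by
    apply Finset.Subset.antisymm (fun a ha => hU1a a ha) (fun a ha => hU1b a ha)
  -- B \ A ⊆ G2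
  have hU2 : B \ A ⊆ G2 rk A := by
    intro f hf
    obtain ⟨hfB, hfA⟩ := Finset.mem_sdiff.1 hf
    refine Finset.mem_filter.2 ⟨Finset.mem_sdiff.2 ⟨Finset.mem_univ f, hfA⟩, fun hcl => ?_⟩
    have hfI : f ∈ intAct rk B := h1 hf
    have hint := (mem_intAct_iff hR0 hR1 hR3 hB hfB).1 hfI
    have hall : ∀ x ∈ G1 rk A ∪ (Finset.univ \ A).filter (fun b => b < f),
        inCl rk x (B.erase f) := by
      intro x hx
      rcases Finset.mem_union.1 hx with hx1 | hx2
      · have : x ∈ B ∩ A := hU1b x hx1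
        exact inCl_of_mem (Finset.mem_erase.2
          ⟨fun h => hfA (h ▸ (Finset.mem_inter.1 this).2), (Finset.mem_inter.1 this).1⟩)
      · obtain ⟨_, hxf⟩ := Finset.mem_filter.1 hx2
        exact hint x hxf
    have hfin : inCl rk f (B.erase f) := inCl_trans hR1 hR2 hcl hall
    unfold inCl at hfin
    rw [Finset.insert_erase hfB] at hfin
    have h3 : rk (B.erase f) = B.card - 1 := rk_erase_basis hR0 hR1 hR3 hB hfB
    have h4 : 1 ≤ B.card := Finset.card_pos.2 ⟨f, hfB⟩
    have h5 := hB.1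
    omega
  -- cardinality
  have hGb : IsBasis rk (G1 rk A ∪ G2 rk A) := G_basis hR0 hR1 hR2 hR3 A
  have hcard1 : B.card = rk Finset.univ := by rw [← hB.2, hB.1]
  have hcard2 : (G1 rk A).card + (G2 rk A).card = rk Finset.univ := by
    rw [← Finset.card_union_of_disjoint (G1_G2_disjoint A), ← hGb.2, hGb.1]
  have hcardBA : (B ∩ A).card + (B \ A).card = B.card := by
    rw [Finset.card_inter_add_card_sdiff]
  have hG2eq : B \ A = G2 rk A := by
    refine Finset.eq_of_subset_of_card_le hU2 ?_
    have : (B ∩ A).card = (G1 rk A).card := by rw [hG1eq]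
    omega
  calc B = (B ∩ A) ∪ (B \ A) := by rw [Finset.union_comm, Finset.sdiff_union_inter]
  _ = G1 rk A ∪ G2 rk A := by rw [hG1eq, hG2eq]


include hR0 hR1 hR2 hR3 in
theorem key_sum (m : Finset α → ℤ) (x y : ℝ) (A : Finset α) :
    ∑ B ∈ Finset.univ.filter (fun B : Finset α => IsBasis rk B),
      ∑ C ∈ (extAct rk B ∪ intAct rk B).powerset,
        (if (B ∪ C) \ intAct rk B ⊆ A ∧ A ⊆ (B \ C) ∪ extAct rk B then
          ((-1 : ℝ)^(extAct rk B \ C).card * (-1)^(((B \ C) ∪ extAct rk B).card - A.card)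
              * (m A : ℝ)) * x^(intAct rk B ∩ C).card * y^(extAct rk B ∩ C).card
        else 0)
    = (m A : ℝ) * (x - 1)^(rk Finset.univ - rk A) * (y - 1)^(A.card - rk A) := by
  classical
  set B₀ := G1 rk A ∪ G2 rk A with hB₀def
  have hB₀ : IsBasis rk B₀ := G_basis hR0 hR1 hR2 hR3 A
  set I := intAct rk B₀ with hIdef
  set E := extAct rk B₀ with hEdef
  set I₀ := B₀ \ A with hI₀def
  set E₀ := A \ B₀ with hE₀def
  have hI₀I : I₀ ⊆ I := G_int hR0 hR1 hR2 hR3 A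
  have hE₀E : E₀ ⊆ E := G_ext hR0 hR1 hR2 hR3 A
  have hIB : I ⊆ B₀ := intAct_subset B₀
  have hEB : ∀ e ∈ E, e ∉ B₀ := extAct_disj B₀
  have hI₀B : I₀ ⊆ B₀ := Finset.sdiff_subset
  have hE₀B : ∀ e ∈ E₀, e ∉ B₀ := fun e he => (Finset.mem_sdiff.1 he).2
  have hAeq : (B₀ \ I₀) ∪ E₀ = A := by
    ext t
    simp only [hI₀def, hE₀def, Finset.mem_union, Finset.mem_sdiff]
    by_cases htB : t ∈ B₀ <;> by_cases htA : t ∈ A <;> simp [htB, htA]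
  have hrkA : rk A = B₀.card - I₀.card := by
    rw [← hAeq]
    exact rk_interval hR0 hR1 hR2 hR3 hB₀ hI₀I hE₀E
  have hAcard : A.card + I₀.card = B₀.card + E₀.card := by
    have h1 : (B₀ \ I₀).card + E₀.card = A.card := by
      rw [← Finset.card_union_of_disjoint, hAeq]
      rw [Finset.disjoint_left]
      intro t ht
      exact fun htE => hE₀B t htE (Finset.mem_sdiff.1 ht).1
    have h2 : I₀.card ≤ B₀.card := Finset.card_le_card hI₀B
    have h3 : (B₀ \ I₀).card = B₀.card - I₀.card := Finset.card_sdiff_of_subset hI₀B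
    omega
  have hI₀card : I₀.card ≤ B₀.card := Finset.card_le_card hI₀B
  have hE₀card : E₀.card ≤ E.card := Finset.card_le_card hE₀E
  have hrkU : rk Finset.univ = B₀.card := by rw [← hB₀.2, hB₀.1]
  have hexpx : rk Finset.univ - rk A = I₀.card := by omega
  have hexpy : A.card - rk A = E₀.card := by omega
  rw [Finset.sum_eq_single_of_mem B₀
    (Finset.mem_filter.2 ⟨Finset.mem_univ _, hB₀⟩)]
  · -- main computation for B₀
    have hcongr : ∀ C ∈ (E ∪ I).powerset,
        (if (B₀ ∪ C) \ I ⊆ A ∧ A ⊆ (B₀ \ C) ∪ E then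
          ((-1 : ℝ)^(E \ C).card * (-1)^(((B₀ \ C) ∪ E).card - A.card) * (m A : ℝ))
            * x^(I ∩ C).card * y^(E ∩ C).card else 0)
        = (if C ∩ I ⊆ I₀ ∧ C ∩ E ⊆ E₀ then
          ((-1 : ℝ)^(E \ C).card * (-1)^(((B₀ \ C) ∪ E).card - A.card) * (m A : ℝ))
            * x^(I ∩ C).card * y^(E ∩ C).card else 0) := by
      intro C hC
      have hCsub : C ⊆ E ∪ I := Finset.mem_powerset.1 hC
      congr 1
      apply propext
      constructor
      · rintro ⟨hL, hU⟩
        constructor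
        · intro t ht
          obtain ⟨htC, htI⟩ := Finset.mem_inter.1 ht
          have htB : t ∈ B₀ := hIB htI
          refine Finset.mem_sdiff.2 ⟨htB, fun htA => ?_⟩
          rcases Finset.mem_union.1 (hU htA) with h | h
          · exact (Finset.mem_sdiff.1 h).2 htC
          · exact hEB t h htB
        · intro t ht
          obtain ⟨htC, htE⟩ := Finset.mem_inter.1 ht
          have htB : t ∉ B₀ := hEB t htE
          refine Finset.mem_sdiff.2 ⟨hL (Finset.mem_sdiff.2
            ⟨Finset.mem_union_right _ htC, fun htI => htB (hIB htI)⟩), htB⟩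
      · rintro ⟨hCI, hCE⟩
        constructor
        · intro t ht
          obtain ⟨htBC, htI⟩ := Finset.mem_sdiff.1 ht
          rcases Finset.mem_union.1 htBC with htB | htC
          · by_contra htA
            exact htI (hI₀I (Finset.mem_sdiff.2 ⟨htB, htA⟩))
          · have htE : t ∈ E := by
              rcases Finset.mem_union.1 (hCsub htC) with h | h
              · exact h
              · exact absurd h htI
            exact (Finset.mem_sdiff.1 (hCE (Finset.mem_inter.2 ⟨htC, htE⟩))).1
        · intro t htA
          by_cases htB : t ∈ B₀
          · refine Finset.mem_union_left _ (Finset.mem_sdiff.2 ⟨htB, fun htC => ?_⟩)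
            have htI : t ∈ I := by
              rcases Finset.mem_union.1 (hCsub htC) with h | h
              · exact absurd htB (hEB t h)
              · exact h
            exact (Finset.mem_sdiff.1 (hCI (Finset.mem_inter.2 ⟨htC, htI⟩))).2 htA
          · exact Finset.mem_union_right _ (hE₀E (Finset.mem_sdiff.2 ⟨htA, htB⟩))
    rw [Finset.sum_congr rfl hcongr, ← Finset.sum_filter]
    -- reindex by pairs
    have hbij : ∑ C ∈ (E ∪ I).powerset.filter (fun C => C ∩ I ⊆ I₀ ∧ C ∩ E ⊆ E₀),
        ((-1 : ℝ)^(E \ C).card * (-1)^(((B₀ \ C) ∪ E).card - A.card) * (m A : ℝ))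
          * x^(I ∩ C).card * y^(E ∩ C).card
        = ∑ p ∈ I₀.powerset ×ˢ E₀.powerset,
        ((-1 : ℝ)^(E \ (p.1 ∪ p.2)).card
            * (-1)^(((B₀ \ (p.1 ∪ p.2)) ∪ E).card - A.card) * (m A : ℝ))
          * x^(I ∩ (p.1 ∪ p.2)).card * y^(E ∩ (p.1 ∪ p.2)).card := by
      refine Finset.sum_nbij' (fun C => (C ∩ I, C ∩ E)) (fun p => p.1 ∪ p.2) ?_ ?_ ?_ ?_ ?_
      · intro C hC
        obtain ⟨-, h1, h2⟩ := Finset.mem_filter.1 hC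
        exact Finset.mem_product.2 ⟨Finset.mem_powerset.2 h1, Finset.mem_powerset.2 h2⟩
      · intro p hp
        obtain ⟨hp1, hp2⟩ := Finset.mem_product.1 hp
        have h1 : p.1 ⊆ I₀ := Finset.mem_powerset.1 hp1
        have h2 : p.2 ⊆ E₀ := Finset.mem_powerset.1 hp2
        refine Finset.mem_filter.2 ⟨Finset.mem_powerset.2 ?_, ?_, ?_⟩
        · intro t ht
          rcases Finset.mem_union.1 ht with h | h
          · exact Finset.mem_union_right _ (hI₀I (h1 h))
          · exact Finset.mem_union_left _ (hE₀E (h2 h))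
        · intro t ht
          exact h1 (by
            obtain ⟨htU, htI⟩ := Finset.mem_inter.1 ht
            rcases Finset.mem_union.1 htU with h | h
            · exact h
            · exact absurd (hIB htI) (hEB t (hE₀E (h2 h))))
        · intro t ht
          exact h2 (by
            obtain ⟨htU, htE⟩ := Finset.mem_inter.1 ht
            rcases Finset.mem_union.1 htU with h | h
            · exact absurd (hIB (hI₀I (h1 h))) (hEB t htE)
            · exact h)
      · intro C hC
        obtain ⟨hCp, -, -⟩ := Finset.mem_filter.1 hC
        have hCsub : C ⊆ E ∪ I := Finset.mem_powerset.1 hCp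
        ext t
        simp only [Finset.mem_union, Finset.mem_inter]
        constructor
        · rintro (⟨h1, -⟩ | ⟨h1, -⟩) <;> exact h1
        · intro ht
          rcases Finset.mem_union.1 (hCsub ht) with h | h
          · exact Or.inr ⟨ht, h⟩
          · exact Or.inl ⟨ht, h⟩
      · intro p hp
        obtain ⟨hp1, hp2⟩ := Finset.mem_product.1 hp
        have h1 : p.1 ⊆ I₀ := Finset.mem_powerset.1 hp1
        have h2 : p.2 ⊆ E₀ := Finset.mem_powerset.1 hp2
        have hd1 : ∀ t ∈ p.2, t ∉ I := fun t ht hI2 => hE₀B t (h2 ht) (hIB hI2)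
        have hd2 : ∀ t ∈ p.1, t ∉ E := fun t ht hE2 => hEB t hE2 (hI₀B (h1 ht))
        have e1 : (p.1 ∪ p.2) ∩ I = p.1 := by
          ext t
          simp only [Finset.mem_inter, Finset.mem_union]
          constructor
          · rintro ⟨h | h, hti⟩
            · exact h
            · exact absurd hti (hd1 t h)
          · intro ht
            exact ⟨Or.inl ht, hI₀I (h1 ht)⟩
        have e2 : (p.1 ∪ p.2) ∩ E = p.2 := by
          ext t
          simp only [Finset.mem_inter, Finset.mem_union]
          constructor
          · rintro ⟨h | h, hte⟩
            · exact absurd hte (hd2 t h)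
            · exact h
          · intro ht
            exact ⟨Or.inr ht, hE₀E (h2 ht)⟩
        exact Prod.ext e1 e2
      · intro C hC
        obtain ⟨hCp, -, -⟩ := Finset.mem_filter.1 hC
        have hCsub : C ⊆ E ∪ I := Finset.mem_powerset.1 hCp
        have hCC : C ∩ I ∪ C ∩ E = C := by
          ext t
          simp only [Finset.mem_union, Finset.mem_inter]
          constructor
          · rintro (⟨h1, -⟩ | ⟨h1, -⟩) <;> exact h1
          · intro ht
            rcases Finset.mem_union.1 (hCsub ht) with h | h
            · exact Or.inr ⟨ht, h⟩
            · exact Or.inl ⟨ht, h⟩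
        simp only
        rw [hCC]
    rw [hbij, Finset.sum_product]
    have hterm : ∀ C₁ ∈ I₀.powerset, ∀ C₂ ∈ E₀.powerset,
        ((-1 : ℝ)^(E \ (C₁ ∪ C₂)).card
            * (-1)^(((B₀ \ (C₁ ∪ C₂)) ∪ E).card - A.card) * (m A : ℝ))
          * x^(I ∩ (C₁ ∪ C₂)).card * y^(E ∩ (C₁ ∪ C₂)).card
        = ((m A : ℝ) * ((-1)^(I₀.card - C₁.card) * x^C₁.card))
            * ((-1)^(E₀.card - C₂.card) * y^C₂.card) := by
      intro C₁ hC₁ C₂ hC₂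
      have h1 : C₁ ⊆ I₀ := Finset.mem_powerset.1 hC₁
      have h2 : C₂ ⊆ E₀ := Finset.mem_powerset.1 hC₂
      have hC₁B : C₁ ⊆ B₀ := h1.trans hI₀B
      have hC₂B : ∀ t ∈ C₂, t ∉ B₀ := fun t ht => hE₀B t (h2 ht)
      have hC₂E : C₂ ⊆ E := h2.trans hE₀E
      have hC₁I : C₁ ⊆ I := h1.trans hI₀I
      have e1 : E \ (C₁ ∪ C₂) = E \ C₂ := by
        ext t
        simp only [Finset.mem_sdiff, Finset.mem_union]
        constructor
        · rintro ⟨ht, h⟩; exact ⟨ht, fun hc => h (Or.inr hc)⟩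
        · rintro ⟨ht, h⟩
          refine ⟨ht, ?_⟩
          rintro (hc | hc)
          · exact hEB t ht (hC₁B hc)
          · exact h hc
      have e2 : B₀ \ (C₁ ∪ C₂) = B₀ \ C₁ := by
        ext t
        simp only [Finset.mem_sdiff, Finset.mem_union]
        constructor
        · rintro ⟨ht, h⟩; exact ⟨ht, fun hc => h (Or.inl hc)⟩
        · rintro ⟨ht, h⟩
          refine ⟨ht, ?_⟩
          rintro (hc | hc)
          · exact h hc
          · exact hC₂B t hc ht
      have e3 : I ∩ (C₁ ∪ C₂) = C₁ := by
        ext t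
        simp only [Finset.mem_inter, Finset.mem_union]
        constructor
        · rintro ⟨hti, h | h⟩
          · exact h
          · exact absurd (hIB hti) (hC₂B t h)
        · intro ht
          exact ⟨hC₁I ht, Or.inl ht⟩
      have e4 : E ∩ (C₁ ∪ C₂) = C₂ := by
        ext t
        simp only [Finset.mem_inter, Finset.mem_union]
        constructor
        · rintro ⟨hte, h | h⟩
          · exact absurd (hC₁B h) (hEB t hte)
          · exact h
        · intro ht
          exact ⟨hC₂E ht, Or.inr ht⟩
      have c1 : (E \ C₂).card = E.card - C₂.card := Finset.card_sdiff_of_subset hC₂E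
      have c2 : ((B₀ \ C₁) ∪ E).card = B₀.card - C₁.card + E.card := by
        rw [Finset.card_union_of_disjoint, Finset.card_sdiff_of_subset hC₁B]
        rw [Finset.disjoint_left]
        intro t ht hte
        exact hEB t hte (Finset.mem_sdiff.1 ht).1
      rw [e1, e2, e3, e4, c1, c2]
      have hc1I : C₁.card ≤ I₀.card := Finset.card_le_card h1
      have hc2E : C₂.card ≤ E₀.card := Finset.card_le_card h2
      have g1 : E.card - C₂.card = (E.card - E₀.card) + (E₀.card - C₂.card) := by omega
      have g2 : B₀.card - C₁.card + E.card - A.card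
          = (I₀.card - C₁.card) + (E.card - E₀.card) := by omega
      rw [g1, g2, pow_add, pow_add]
      have : ((-1 : ℝ)^(E.card - E₀.card) * (-1)^(E.card - E₀.card)) = 1 :=
        neg_one_pow_double _
      calc ((-1 : ℝ)^(E.card - E₀.card) * (-1)^(E₀.card - C₂.card)
            * ((-1)^(I₀.card - C₁.card) * (-1)^(E.card - E₀.card)) * (m A : ℝ))
            * x^C₁.card * y^C₂.card
          = ((-1 : ℝ)^(E.card - E₀.card) * (-1)^(E.card - E₀.card))
            * (((m A : ℝ) * ((-1)^(I₀.card - C₁.card) * x^C₁.card))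
              * ((-1)^(E₀.card - C₂.card) * y^C₂.card)) := by ring
      _ = ((m A : ℝ) * ((-1)^(I₀.card - C₁.card) * x^C₁.card))
            * ((-1)^(E₀.card - C₂.card) * y^C₂.card) := by rw [this, one_mul]
    calc ∑ C₁ ∈ I₀.powerset, ∑ C₂ ∈ E₀.powerset,
        ((-1 : ℝ)^(E \ (C₁ ∪ C₂)).card
            * (-1)^(((B₀ \ (C₁ ∪ C₂)) ∪ E).card - A.card) * (m A : ℝ))
          * x^(I ∩ (C₁ ∪ C₂)).card * y^(E ∩ (C₁ ∪ C₂)).card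
        = ∑ C₁ ∈ I₀.powerset, ∑ C₂ ∈ E₀.powerset,
          ((m A : ℝ) * ((-1)^(I₀.card - C₁.card) * x^C₁.card))
            * ((-1)^(E₀.card - C₂.card) * y^C₂.card) := by
          refine Finset.sum_congr rfl (fun C₁ hC₁ => Finset.sum_congr rfl (fun C₂ hC₂ => ?_))
          exact hterm C₁ hC₁ C₂ hC₂
    _ = (∑ C₁ ∈ I₀.powerset, (m A : ℝ) * ((-1)^(I₀.card - C₁.card) * x^C₁.card))
          * (∑ C₂ ∈ E₀.powerset, (-1 : ℝ)^(E₀.card - C₂.card) * y^C₂.card) := by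
          rw [← Finset.sum_mul_sum]
    _ = (m A : ℝ) * (x - 1)^(rk Finset.univ - rk A) * (y - 1)^(A.card - rk A) := by
          rw [← Finset.mul_sum, sum_powerset_sign x I₀, sum_powerset_sign y E₀,
            hexpx, hexpy, mul_assoc]
  · -- other bases contribute zero
    intro B hBmem hne
    refine Finset.sum_eq_zero (fun C hC => ?_)
    rw [if_neg]
    rintro ⟨hL, hU⟩
    refine hne ?_
    have hBbasis : IsBasis rk B := (Finset.mem_filter.1 hBmem).2
    have hBA : B \ A ⊆ intAct rk B := by
      intro b hb
      obtain ⟨hbB, hbA⟩ := Finset.mem_sdiff.1 hb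
      by_contra hbI
      exact hbA (hL (Finset.mem_sdiff.2 ⟨Finset.mem_union_left _ hbB, hbI⟩))
    have hAB : A \ B ⊆ extAct rk B := by
      intro a ha
      obtain ⟨haA, haB⟩ := Finset.mem_sdiff.1 ha
      rcases Finset.mem_union.1 (hU haA) with h | h
      · exact absurd (Finset.mem_sdiff.1 h).1 haB
      · exact h
    exact basis_unique hR0 hR1 hR2 hR3 hBbasis hBA hAB

end Act




/-- generalized Crapo formula: for a pseudo-arithmetic matroid with
integral multiplicities,
`M(x,y) = Σ_{(B,C)} ρ((B∪C)∖I(B), (B∖C)∪E(B)) x^{|I(B)∩C|} y^{|E(B)∩C|}`,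
the sum being over bases `B` and subsets `C ⊆ E(B) ∪ I(B)`. -/
theorem generalized_crapo {α : Type*} [Fintype α] [LinearOrder α]
    (rk : Finset α → ℕ) (m : Finset α → ℤ)
    (hR0 : rk ∅ = 0)
    (hR1 : ∀ A B : Finset α, A ⊆ B → rk A ≤ rk B)
    (hR2 : ∀ A B : Finset α, rk (A ∪ B) + rk (A ∩ B) ≤ rk A + rk B)
    (hR3 : ∀ (A : Finset α) (e : α), rk (insert e A) ≤ rk A + 1)
    (hP : ∀ R F T : Finset α, IsMoleculeWith rk R F T → 0 ≤ rho m T R (R ∪ F ∪ T))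
    (x y : ℝ) :
    ∑ A : Finset α, (m A : ℝ) * (x - 1) ^ (rk Finset.univ - rk A) *
        (y - 1) ^ (A.card - rk A) =
      ∑ B ∈ Finset.univ.filter (fun B : Finset α => IsBasis rk B),
        ∑ C ∈ (extAct rk B ∪ intAct rk B).powerset,
          (rho m (extAct rk B \ C) ((B ∪ C) \ intAct rk B) ((B \ C) ∪ extAct rk B) : ℝ) *
            x ^ (intAct rk B ∩ C).card * y ^ (extAct rk B ∩ C).card := by
  classical
  have step1 : ∀ B C : Finset α,
      ((rho m (extAct rk B \ C) ((B ∪ C) \ intAct rk B) ((B \ C) ∪ extAct rk B) : ℤ) : ℝ) *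
          x ^ (intAct rk B ∩ C).card * y ^ (extAct rk B ∩ C).card
      = ∑ A ∈ Finset.univ,
          (if (B ∪ C) \ intAct rk B ⊆ A ∧ A ⊆ (B \ C) ∪ extAct rk B then
            ((-1 : ℝ)^(extAct rk B \ C).card
                * (-1)^(((B \ C) ∪ extAct rk B).card - A.card) * (m A : ℝ))
              * x^(intAct rk B ∩ C).card * y^(extAct rk B ∩ C).card
          else 0) := by
    intro B C
    set R := (B ∪ C) \ intAct rk B with hR
    set S := (B \ C) ∪ extAct rk B with hS
    set T := extAct rk B \ C with hT
    symm
    calc ∑ A ∈ Finset.univ,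
          (if R ⊆ A ∧ A ⊆ S then
            ((-1 : ℝ)^T.card * (-1)^(S.card - A.card) * (m A : ℝ))
              * x^(intAct rk B ∩ C).card * y^(extAct rk B ∩ C).card
          else 0)
        = ∑ A ∈ Finset.univ, (if A ∈ Finset.Icc R S then
            ((-1 : ℝ)^(S.card - A.card) * (m A : ℝ))
              * ((-1 : ℝ)^T.card * x^(intAct rk B ∩ C).card * y^(extAct rk B ∩ C).card)
          else 0) := by
          refine Finset.sum_congr rfl (fun A _ => ?_)
          have hIcc : A ∈ Finset.Icc R S ↔ (R ⊆ A ∧ A ⊆ S) := by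
            rw [Finset.mem_Icc]
          by_cases h : R ⊆ A ∧ A ⊆ S
          · rw [if_pos h, if_pos (hIcc.2 h)]; ring
          · rw [if_neg h, if_neg (fun hm => h (hIcc.1 hm))]
    _ = ∑ A ∈ Finset.univ ∩ Finset.Icc R S,
          ((-1 : ℝ)^(S.card - A.card) * (m A : ℝ))
            * ((-1 : ℝ)^T.card * x^(intAct rk B ∩ C).card * y^(extAct rk B ∩ C).card) :=
          Finset.sum_ite_mem _ _ _
    _ = (∑ A ∈ Finset.Icc R S, (-1 : ℝ)^(S.card - A.card) * (m A : ℝ))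
            * ((-1 : ℝ)^T.card * x^(intAct rk B ∩ C).card * y^(extAct rk B ∩ C).card) := by
          rw [Finset.univ_inter, Finset.sum_mul]
    _ = ((rho m T R S : ℤ) : ℝ) * x^(intAct rk B ∩ C).card * y^(extAct rk B ∩ C).card := by
          rw [rho]
          push_cast
          ring
  calc ∑ A : Finset α, (m A : ℝ) * (x - 1) ^ (rk Finset.univ - rk A) *
        (y - 1) ^ (A.card - rk A)
      = ∑ A ∈ Finset.univ,
          ∑ B ∈ Finset.univ.filter (fun B : Finset α => IsBasis rk B),
          ∑ C ∈ (extAct rk B ∪ intAct rk B).powerset,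
          (if (B ∪ C) \ intAct rk B ⊆ A ∧ A ⊆ (B \ C) ∪ extAct rk B then
            ((-1 : ℝ)^(extAct rk B \ C).card
                * (-1)^(((B \ C) ∪ extAct rk B).card - A.card) * (m A : ℝ))
              * x^(intAct rk B ∩ C).card * y^(extAct rk B ∩ C).card
          else 0) := by
        refine Finset.sum_congr rfl (fun A _ => ?_)
        exact (key_sum hR0 hR1 hR2 hR3 m x y A).symm
  _ = ∑ B ∈ Finset.univ.filter (fun B : Finset α => IsBasis rk B),
          ∑ A ∈ Finset.univ,
          ∑ C ∈ (extAct rk B ∪ intAct rk B).powerset,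
          (if (B ∪ C) \ intAct rk B ⊆ A ∧ A ⊆ (B \ C) ∪ extAct rk B then
            ((-1 : ℝ)^(extAct rk B \ C).card
                * (-1)^(((B \ C) ∪ extAct rk B).card - A.card) * (m A : ℝ))
              * x^(intAct rk B ∩ C).card * y^(extAct rk B ∩ C).card
          else 0) := Finset.sum_comm
  _ = ∑ B ∈ Finset.univ.filter (fun B : Finset α => IsBasis rk B),
          ∑ C ∈ (extAct rk B ∪ intAct rk B).powerset,
          ∑ A ∈ Finset.univ,
          (if (B ∪ C) \ intAct rk B ⊆ A ∧ A ⊆ (B \ C) ∪ extAct rk B then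
            ((-1 : ℝ)^(extAct rk B \ C).card
                * (-1)^(((B \ C) ∪ extAct rk B).card - A.card) * (m A : ℝ))
              * x^(intAct rk B ∩ C).card * y^(extAct rk B ∩ C).card
          else 0) := by
        refine Finset.sum_congr rfl (fun B _ => ?_)
        exact Finset.sum_comm
  _ = ∑ B ∈ Finset.univ.filter (fun B : Finset α => IsBasis rk B),
        ∑ C ∈ (extAct rk B ∪ intAct rk B).powerset,
          (rho m (extAct rk B \ C) ((B ∪ C) \ intAct rk B) ((B \ C) ∪ extAct rk B) : ℝ) *
            x ^ (intAct rk B ∩ C).card * y ^ (extAct rk B ∩ C).card := by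
        refine Finset.sum_congr rfl (fun B _ => Finset.sum_congr rfl (fun C _ => ?_))
        exact (step1 B C).symm
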